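/- Let θ ∈ (0,1), c > 0, and let v̂ : ℝ × [0,∞) → ℝ be a bounded C^{1,2} function satisfying v̂_t = v̂_xx + c(t)·v̂_x for x ≥ 0, where c : ℝ → ℝ is continuous with c(t) ≥ c₀/2 > 0 for all t, together with v̂(t,0) ≤ 1 for all t ∈ ℝ and v̂(t,x) → 0 as x → ∞ uniformly in t ∈ ℝ. Assume additionally that v̂_x is bounded on ℝ × [0,∞) and that c is Lipschitz with bounded derivative. Then v̂(t,x) ≤ e^{-(c₀/2)·x} for all x ≥ 0 and t ∈ ℝ. -/

import Mathlib

open Set Filter Topology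

/-- If `f` has derivative `f'` at `t`, `a < t`, and `t` is a minimum of `f` on `[a,t]`,
then `f' ≤ 0`. -/
lemma qp_deriv_nonpos_of_min_left {f : ℝ → ℝ} {f' a t : ℝ} (hat : a < t)
    (hf : HasDerivAt f f' t) (hmin : ∀ s ∈ Set.Icc a t, f t ≤ f s) : f' ≤ 0 := by
  have hs : Tendsto (slope f t) (𝓝[<] t) (𝓝 f') :=
    (hasDerivAt_iff_tendsto_slope.1 hf).mono_left (nhdsWithin_mono _ fun y hy => ne_of_lt hy)
  refine le_of_tendsto hs ?_
  filter_upwards [Ioo_mem_nhdsLT_of_mem (Set.mem_Ioc.2 ⟨hat, le_rfl⟩)] with s hs'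
  rw [slope_def_field]
  apply div_nonpos_of_nonneg_of_nonpos
  · exact sub_nonneg.2 (hmin s ⟨hs'.1.le, hs'.2.le⟩)
  · linarith [hs'.2]

/-- Second derivative test: at an interior (from the right) minimum, the second
derivative is nonnegative. -/
lemma qp_second_deriv_nonneg {f g : ℝ → ℝ} {K x b : ℝ} (hxb : x < b)
    (hd : ∀ y ∈ Set.Icc x b, HasDerivAt f (g y) y)
    (hg0 : g x = 0) (hd2 : HasDerivAt g K x)
    (hmin : ∀ y ∈ Set.Icc x b, f x ≤ f y) : 0 ≤ K := by
  by_contra hK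
  push_neg at hK
  have hs : Tendsto (slope g x) (𝓝[>] x) (𝓝 K) :=
    (hasDerivAt_iff_tendsto_slope.1 hd2).mono_left (nhdsWithin_mono _ fun y hy => ne_of_gt hy)
  have hev : ∀ᶠ y in 𝓝[>] x, slope g x y < K / 2 := hs.eventually_lt_const (by linarith)
  obtain ⟨δ, hδpos, hball⟩ := Metric.mem_nhdsWithin_iff.1 hev
  set b' := min b (x + δ / 2) with hb'
  have hxb' : x < b' := lt_min hxb (by linarith)
  have hb'b : b' ≤ b := min_le_left _ _
  have hgneg : ∀ y ∈ Set.Ioo x b', g y < 0 := by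
    intro y hy
    have hyb : y ∈ Metric.ball x δ ∩ Set.Ioi x := by
      constructor
      · rw [Metric.mem_ball, Real.dist_eq, abs_of_pos (by linarith [hy.1])]
        have : y < x + δ / 2 := lt_of_lt_of_le hy.2 (min_le_right _ _)
        linarith
      · exact hy.1
    have hsl : slope g x y < K / 2 := hball hyb
    rw [slope_def_field, hg0, sub_zero] at hsl
    have hyx : 0 < y - x := by linarith [hy.1]
    have : g y / (y - x) < 0 := lt_trans hsl (by linarith)
    rcases div_neg_iff.1 this with ⟨h1, h2⟩ | ⟨h1, h2⟩
    · linarith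
    · exact h1
  have hanti : StrictAntiOn f (Set.Icc x b') := by
    apply strictAntiOn_of_deriv_neg (convex_Icc x b')
    · intro y hy
      exact (hd y ⟨hy.1, le_trans hy.2 hb'b⟩).continuousAt.continuousWithinAt
    · intro y hy
      rw [interior_Icc] at hy
      rw [(hd y ⟨hy.1.le, le_trans hy.2.le hb'b⟩).deriv]
      exact hgneg y hy
  have hlt : f b' < f x :=
    hanti (Set.left_mem_Icc.2 hxb'.le) (Set.right_mem_Icc.2 hxb'.le) hxb'
  have := hmin b' ⟨hxb'.le, hb'b⟩
  linarith

lemma qp_cont (v : ℝ → ℝ → ℝ) (vt vx : ℝ → ℝ → ℝ) (B' : ℝ)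
    (hvt : ∀ t x : ℝ, 0 ≤ x → HasDerivAt (fun τ => v τ x) (vt t x) t)
    (hvx : ∀ t x : ℝ, 0 ≤ x → HasDerivAt (fun y => v t y) (vx t x) x)
    (hB' : ∀ t x : ℝ, 0 ≤ x → |vx t x| ≤ B') :
    ContinuousOn (fun p : ℝ × ℝ => v p.1 p.2) {p : ℝ × ℝ | 0 ≤ p.2} := by
  have hB'0 : 0 ≤ B' := le_trans (abs_nonneg _) (hB' 0 0 le_rfl)
  have hlip : ∀ p q t : ℝ, 0 ≤ p → p ≤ q → |v t q - v t p| ≤ B' * (q - p) := by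
    intro p q t hp hpq
    have := norm_image_sub_le_of_norm_deriv_le_segment'
      (f := fun y => v t y) (f' := fun y => vx t y) (a := p) (b := q)
      (fun y hy => (hvx t y (le_trans hp hy.1)).hasDerivWithinAt)
      (fun y hy => by simpa [Real.norm_eq_abs] using hB' t y (le_trans hp hy.1))
      q (Set.right_mem_Icc.2 hpq)
    simpa [Real.norm_eq_abs] using this
  have hvcont : Continuous fun p : ℝ × ℝ => v p.2 (max p.1 0) := by
    apply continuous_prod_of_continuous_lipschitzWith _ ⟨B', hB'0⟩
    · intro x
      exact continuous_iff_continuousAt.2 fun t => (hvt t (max x 0) (le_max_right _ _)).continuousAt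
    · intro t
      apply LipschitzWith.of_dist_le_mul
      intro x y
      rw [Real.dist_eq, Real.dist_eq]
      have hmm : |max x 0 - max y 0| ≤ |x - y| := abs_max_sub_max_le_abs x y 0
      simp only [NNReal.coe_mk]
      rcases le_total (max y 0) (max x 0) with h | h
      · refine le_trans (hlip _ _ _ (le_max_right _ _) h) ?_
        have : max x 0 - max y 0 ≤ |x - y| := le_trans (le_abs_self _) hmm
        exact mul_le_mul_of_nonneg_left this hB'0
      · rw [abs_sub_comm]
        refine le_trans (hlip _ _ _ (le_max_right _ _) h) ?_
        have : max y 0 - max x 0 ≤ |x - y| :=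
          le_trans (le_abs_self _) (le_trans (le_of_eq (abs_sub_comm _ _)) hmm)
        exact mul_le_mul_of_nonneg_left this hB'0
  have : ContinuousOn (fun p : ℝ × ℝ => v p.1 (max p.2 0)) {p : ℝ × ℝ | 0 ≤ p.2} :=
    ((hvcont.comp continuous_swap).continuousOn)
  refine ContinuousOn.congr this ?_
  intro p hp
  simp only []
  rw [max_eq_left hp]

/-- Weak maximum principle on a rectangle for a strict supersolution of the
drift heat equation: if `U` is positive on the parabolic boundary and
`Ut - Uxx - c Ux > 0` everywhere, then `U > 0` everywhere on the rectangle. -/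
lemma qp_max_principle (a b X : ℝ) (hab : a < b) (hX : 0 < X)
    (U Ut Ux Uxx : ℝ → ℝ → ℝ) (c : ℝ → ℝ)
    (hdt : ∀ t ∈ Set.Icc a b, ∀ x ∈ Set.Icc 0 X, HasDerivAt (fun τ => U τ x) (Ut t x) t)
    (hdx : ∀ t ∈ Set.Icc a b, ∀ x ∈ Set.Icc 0 X, HasDerivAt (fun y => U t y) (Ux t x) x)
    (hdxx : ∀ t ∈ Set.Icc a b, ∀ x ∈ Set.Icc 0 X, HasDerivAt (fun y => Ux t y) (Uxx t x) x)
    (hcont : ContinuousOn (fun p : ℝ × ℝ => U p.1 p.2) (Set.Icc a b ×ˢ Set.Icc 0 X))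
    (hs : ∀ t ∈ Set.Icc a b, ∀ x ∈ Set.Icc 0 X, 0 < Ut t x - Uxx t x - c t * Ux t x)
    (h0 : ∀ x ∈ Set.Icc 0 X, 0 < U a x)
    (hleft : ∀ t ∈ Set.Icc a b, 0 < U t 0)
    (hright : ∀ t ∈ Set.Icc a b, 0 < U t X) :
    ∀ t ∈ Set.Icc a b, ∀ x ∈ Set.Icc 0 X, 0 < U t x := by
  have hQc : IsCompact (Set.Icc a b ×ˢ Set.Icc 0 X) := isCompact_Icc.prod isCompact_Icc
  have hQne : (Set.Icc a b ×ˢ Set.Icc 0 X).Nonempty :=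
    ⟨(a, 0), Set.mk_mem_prod (Set.left_mem_Icc.2 hab.le) (Set.left_mem_Icc.2 hX.le)⟩
  obtain ⟨p, hpQ, hpmin'⟩ := hQc.exists_isMinOn hQne hcont
  have hpmin : ∀ q ∈ Set.Icc a b ×ˢ Set.Icc 0 X, U p.1 p.2 ≤ U q.1 q.2 :=
    fun q hq => hpmin' hq
  obtain ⟨hpt, hpx⟩ := Set.mem_prod.1 hpQ
  suffices hpos : 0 < U p.1 p.2 by
    intro t ht x hx
    exact lt_of_lt_of_le hpos (hpmin (t, x) (Set.mk_mem_prod ht hx))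
  by_contra hle
  push_neg at hle
  -- p.2 ≠ 0
  have hx0 : p.2 ≠ 0 := by
    intro h
    rw [h] at hle
    linarith [hleft p.1 hpt]
  have hxX : p.2 ≠ X := by
    intro h
    rw [h] at hle
    linarith [hright p.1 hpt]
  have hta : p.1 ≠ a := by
    intro h
    rw [h] at hle
    linarith [h0 p.2 hpx]
  have hx1 : 0 < p.2 := lt_of_le_of_ne hpx.1 (Ne.symm hx0)
  have hx2 : p.2 < X := lt_of_le_of_ne hpx.2 hxX
  have ht1 : a < p.1 := lt_of_le_of_ne hpt.1 (Ne.symm hta)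
  -- first derivative in x vanishes
  have hUx0 : Ux p.1 p.2 = 0 := by
    have hloc : IsLocalMin (fun y => U p.1 y) p.2 := by
      have : Set.Icc (0:ℝ) X ∈ 𝓝 p.2 := Icc_mem_nhds hx1 hx2
      exact Filter.eventually_of_mem this fun y hy => hpmin (p.1, y) (Set.mk_mem_prod hpt hy)
    exact hloc.hasDerivAt_eq_zero (hdx p.1 hpt p.2 hpx)
  -- time derivative is nonpositive
  have hUt0 : Ut p.1 p.2 ≤ 0 := by
    apply qp_deriv_nonpos_of_min_left ht1 (hdt p.1 hpt p.2 hpx)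
    intro s hsI
    exact hpmin (s, p.2) (Set.mk_mem_prod ⟨hsI.1, le_trans hsI.2 hpt.2⟩ hpx)
  -- second derivative in x is nonnegative
  have hUxx0 : 0 ≤ Uxx p.1 p.2 := by
    apply qp_second_deriv_nonneg hx2
      (fun y hy => hdx p.1 hpt y ⟨le_trans hx1.le hy.1, hy.2⟩) hUx0
      (hdxx p.1 hpt p.2 hpx)
    intro y hy
    exact hpmin (p.1, y) (Set.mk_mem_prod hpt ⟨le_trans hx1.le hy.1, hy.2⟩)
  have := hs p.1 hpt p.2 hpx
  rw [hUx0] at this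
  linarith

set_option maxHeartbeats 1000000 in
theorem stmt_17 (θ c₀ : ℝ) (hθ : θ ∈ Set.Ioo (0 : ℝ) 1) (hc₀ : 0 < c₀)
    (v : ℝ → ℝ → ℝ) (vt vx vxx : ℝ → ℝ → ℝ) (c : ℝ → ℝ) (L : NNReal)
    (hccont : Continuous c) (hclip : LipschitzWith L c)
    (hclow : ∀ t : ℝ, c₀ / 2 ≤ c t)
    (hvt : ∀ t x : ℝ, 0 ≤ x → HasDerivAt (fun τ => v τ x) (vt t x) t)
    (hvx : ∀ t x : ℝ, 0 ≤ x → HasDerivAt (fun y => v t y) (vx t x) x)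
    (hvxx : ∀ t x : ℝ, 0 ≤ x → HasDerivAt (fun y => vx t y) (vxx t x) x)
    (hpde : ∀ t x : ℝ, 0 ≤ x → vt t x = vxx t x + c t * vx t x)
    (hbdd : ∃ B : ℝ, ∀ t x : ℝ, 0 ≤ x → |v t x| ≤ B)
    (hvxbdd : ∃ B' : ℝ, ∀ t x : ℝ, 0 ≤ x → |vx t x| ≤ B')
    (hbc : ∀ t : ℝ, v t 0 ≤ 1)
    (hdecay : ∀ ε : ℝ, 0 < ε → ∃ M : ℝ, ∀ t x : ℝ, M ≤ x → |v t x| ≤ ε) :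
    ∀ t x : ℝ, 0 ≤ x → v t x ≤ Real.exp (-(c₀ / 2) * x) := by
  obtain ⟨B, hB⟩ := hbdd
  obtain ⟨B', hB'⟩ := hvxbdd
  have hB0 : 0 ≤ B := le_trans (abs_nonneg _) (hB 0 0 le_rfl)
  have hvcontOn : ContinuousOn (fun p : ℝ × ℝ => v p.1 p.2) {p : ℝ × ℝ | 0 ≤ p.2} :=
    qp_cont v vt vx B' hvt hvx hB'
  intro t₀ x₀ hx₀
  set lam : ℝ := c₀ / 2 with hlam
  set μ : ℝ := c₀ / 4 with hμdef
  have hμpos : 0 < μ := by rw [hμdef]; linarith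
  have hlampos : 0 < lam := by rw [hlam]; linarith
  have hm₀ : (0:ℝ) < B + 1 := by linarith
  -- reduce to an epsilon statement
  suffices H : ∀ ε : ℝ, 0 < ε → v t₀ x₀ - Real.exp (-lam * x₀) ≤ 3 * ε by
    by_contra hcon
    push_neg at hcon
    have h6 : 0 < (v t₀ x₀ - Real.exp (-lam * x₀)) / 6 :=
      div_pos (by linarith) (by norm_num)
    have := H _ h6
    linarith
  intro ε hε
  obtain ⟨M, hM⟩ := hdecay ε hε
  set X : ℝ := max x₀ (max M 1) with hX
  have hXx₀ : x₀ ≤ X := le_max_left _ _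
  have hXM : M ≤ X := le_trans (le_max_left _ _) (le_max_right _ _)
  have hXpos : (0:ℝ) < X := lt_of_lt_of_le one_pos (le_trans (le_max_right _ _) (le_max_right _ _))
  set γ : ℝ := μ ^ 2 * Real.exp (-μ * X) / 2 with hγdef
  have hγpos : 0 < γ := by rw [hγdef]; positivity
  -- the core barrier estimate, for every T > 0 and ρ > 0
  have core : ∀ T : ℝ, 0 < T → ∀ ρ : ℝ, 0 < ρ →
      v t₀ x₀ - Real.exp (-lam * x₀) <
        ε + 2 * (B + 1) * Real.exp (-γ * T) + ρ * Real.exp t₀ := by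
    intro T hT ρ hρ
    set a : ℝ := t₀ - T with ha
    have hab : a < t₀ := by rw [ha]; linarith
    set U : ℝ → ℝ → ℝ := fun t x =>
      ε + (B + 1) * Real.exp (-γ * (t - a)) * (Real.exp (-μ * x) + 1) + ρ * Real.exp t
        - v t x + Real.exp (-lam * x) with hU
    set Ut : ℝ → ℝ → ℝ := fun t x =>
      (B + 1) * (Real.exp (-γ * (t - a)) * -γ) * (Real.exp (-μ * x) + 1) + ρ * Real.exp t
        - vt t x with hUt
    set Ux : ℝ → ℝ → ℝ := fun t x =>
      (B + 1) * Real.exp (-γ * (t - a)) * (Real.exp (-μ * x) * -μ) - vx t x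
        + Real.exp (-lam * x) * -lam with hUx
    set Uxx : ℝ → ℝ → ℝ := fun t x =>
      (B + 1) * Real.exp (-γ * (t - a)) * (Real.exp (-μ * x) * -μ * -μ) - vxx t x
        + Real.exp (-lam * x) * -lam * -lam with hUxx
    -- derivatives
    have hdt : ∀ t ∈ Set.Icc a t₀, ∀ x ∈ Set.Icc (0:ℝ) X,
        HasDerivAt (fun τ => U τ x) (Ut t x) t := by
      intro t _ x hx
      have d1 : HasDerivAt (fun τ : ℝ => -γ * (τ - a)) (-γ) t := by
        simpa using ((hasDerivAt_id t).sub_const a).const_mul (-γ)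
      have d2 := d1.exp
      have d3 := (d2.const_mul (B + 1)).mul_const (Real.exp (-μ * x) + 1)
      have d4 := (Real.hasDerivAt_exp t).const_mul ρ
      have D := ((((hasDerivAt_const t ε).add d3).add d4).sub (hvt t x hx.1)).add_const
        (Real.exp (-lam * x))
      simp only [hU, hUt]
      convert D using 1
      all_goals try (funext y; rfl)
      all_goals try ring
      all_goals rfl
    have hdx : ∀ t ∈ Set.Icc a t₀, ∀ x ∈ Set.Icc (0:ℝ) X,
        HasDerivAt (fun y => U t y) (Ux t x) x := by
      intro t _ x hx
      have d1 : HasDerivAt (fun y : ℝ => -μ * y) (-μ) x := by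
        simpa using (hasDerivAt_id x).const_mul (-μ)
      have d2 := (d1.exp.add_const 1).const_mul ((B + 1) * Real.exp (-γ * (t - a)))
      have d5 : HasDerivAt (fun y : ℝ => -lam * y) (-lam) x := by
        simpa using (hasDerivAt_id x).const_mul (-lam)
      have D := ((((hasDerivAt_const x ε).add d2).add
        (hasDerivAt_const x (ρ * Real.exp t))).sub (hvx t x hx.1)).add d5.exp
      simp only [hU, hUx]
      convert D using 1
      all_goals try (funext y; rfl)
      all_goals try ring
      all_goals rfl
    have hdxx : ∀ t ∈ Set.Icc a t₀, ∀ x ∈ Set.Icc (0:ℝ) X,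
        HasDerivAt (fun y => Ux t y) (Uxx t x) x := by
      intro t _ x hx
      have d1 : HasDerivAt (fun y : ℝ => -μ * y) (-μ) x := by
        simpa using (hasDerivAt_id x).const_mul (-μ)
      have d2 := (d1.exp.mul_const (-μ)).const_mul ((B + 1) * Real.exp (-γ * (t - a)))
      have d5 : HasDerivAt (fun y : ℝ => -lam * y) (-lam) x := by
        simpa using (hasDerivAt_id x).const_mul (-lam)
      have D := (d2.sub (hvxx t x hx.1)).add (d5.exp.mul_const (-lam))
      simp only [hUx, hUxx]
      convert D using 1
      all_goals try (funext y; rfl)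
      all_goals try ring
      all_goals rfl
    -- continuity
    have hcont : ContinuousOn (fun p : ℝ × ℝ => U p.1 p.2)
        (Set.Icc a t₀ ×ˢ Set.Icc (0:ℝ) X) := by
      simp only [hU]
      apply ContinuousOn.add
      apply ContinuousOn.sub
      · apply Continuous.continuousOn
        fun_prop
      · exact hvcontOn.mono fun p hp => (Set.mem_prod.1 hp).2.1
      · apply Continuous.continuousOn
        fun_prop
    -- strict supersolution
    have hsup : ∀ t ∈ Set.Icc a t₀, ∀ x ∈ Set.Icc (0:ℝ) X,
        0 < Ut t x - Uxx t x - c t * Ux t x := by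
      intro t _ x hx
      have hml : 2 * μ = lam := by rw [hμdef, hlam]; ring
      have hc2 : 2 * μ ≤ c t := by
        have := hclow t
        linarith
      have he1X : Real.exp (-μ * X) ≤ Real.exp (-μ * x) :=
        Real.exp_le_exp.2 (by nlinarith [hx.2])
      have he11 : Real.exp (-μ * x) ≤ 1 := Real.exp_le_one_iff.2 (by nlinarith [hx.1])
      have hE : 0 < Real.exp (-γ * (t - a)) := Real.exp_pos _
      have he2 : 0 < Real.exp (-lam * x) := Real.exp_pos _
      have he1pos : 0 < Real.exp (-μ * x) := Real.exp_pos _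
      have hkey1 : 0 ≤ -γ * (Real.exp (-μ * x) + 1) + (c t * μ - μ ^ 2) * Real.exp (-μ * x) := by
        have h1 : μ ^ 2 * Real.exp (-μ * X) ≤ (c t * μ - μ ^ 2) * Real.exp (-μ * x) := by
          apply mul_le_mul (by nlinarith) he1X (le_of_lt (Real.exp_pos _)) (by nlinarith)
        have h2 : γ * (Real.exp (-μ * x) + 1) ≤ 2 * γ := by nlinarith
        rw [hγdef] at h2 ⊢
        linarith
      have hkey2 : 0 ≤ lam * (c t - lam) * Real.exp (-lam * x) := by
        apply mul_nonneg (mul_nonneg hlampos.le _) he2.le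
        have := hclow t
        linarith
      have hEq : Ut t x - Uxx t x - c t * Ux t x =
          (B + 1) * Real.exp (-γ * (t - a)) *
            (-γ * (Real.exp (-μ * x) + 1) + (c t * μ - μ ^ 2) * Real.exp (-μ * x))
          + ρ * Real.exp t + lam * (c t - lam) * Real.exp (-lam * x) := by
        simp only [hUt, hUx, hUxx]
        rw [hpde t x hx.1]
        ring
      rw [hEq]
      have hfirst : 0 ≤ (B + 1) * Real.exp (-γ * (t - a)) *
          (-γ * (Real.exp (-μ * x) + 1) + (c t * μ - μ ^ 2) * Real.exp (-μ * x)) :=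
        mul_nonneg (mul_nonneg hm₀.le hE.le) hkey1
      have hr : 0 < ρ * Real.exp t := mul_pos hρ (Real.exp_pos _)
      linarith
    -- boundary: initial time
    have h0 : ∀ x ∈ Set.Icc (0:ℝ) X, 0 < U a x := by
      intro x hx
      have hv : v a x ≤ B := (abs_le.1 (hB a x hx.1)).2
      have h1 : -γ * (a - a) = 0 := by ring
      simp only [hU, h1, Real.exp_zero]
      have he1 : 0 < Real.exp (-μ * x) := Real.exp_pos _
      have he2 : 0 < Real.exp (-lam * x) := Real.exp_pos _
      have hr : 0 < ρ * Real.exp a := mul_pos hρ (Real.exp_pos _)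
      have hp2 : B + 1 ≤ (B + 1) * 1 * (Real.exp (-μ * x) + 1) := by nlinarith
      linarith
    -- boundary: x = 0
    have hleft : ∀ t ∈ Set.Icc a t₀, 0 < U t 0 := by
      intro t _
      have h1 : -μ * (0:ℝ) = 0 := by ring
      have h2 : -lam * (0:ℝ) = 0 := by ring
      simp only [hU, h1, h2, Real.exp_zero]
      have hE : 0 < Real.exp (-γ * (t - a)) := Real.exp_pos _
      have hr : 0 < ρ * Real.exp t := mul_pos hρ (Real.exp_pos _)
      have hp : 0 < (B + 1) * Real.exp (-γ * (t - a)) * (1 + 1) := by positivity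
      have := hbc t
      linarith
    -- boundary: x = X
    have hright : ∀ t ∈ Set.Icc a t₀, 0 < U t X := by
      intro t _
      have hv : v t X ≤ ε := (abs_le.1 (hM t X hXM)).2
      simp only [hU]
      have hE : 0 < Real.exp (-γ * (t - a)) := Real.exp_pos _
      have he1 : 0 < Real.exp (-μ * X) := Real.exp_pos _
      have he2 : 0 < Real.exp (-lam * X) := Real.exp_pos _
      have hr : 0 < ρ * Real.exp t := mul_pos hρ (Real.exp_pos _)
      have hp : 0 < (B + 1) * Real.exp (-γ * (t - a)) * (Real.exp (-μ * X) + 1) := by positivity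
      linarith
    -- apply the maximum principle at (t₀, x₀)
    have hmain := qp_max_principle a t₀ X hab hXpos U Ut Ux Uxx c hdt hdx hdxx hcont hsup
      h0 hleft hright t₀ ⟨hab.le, le_rfl⟩ x₀ ⟨hx₀, hXx₀⟩
    simp only [hU] at hmain
    have he1 : Real.exp (-μ * x₀) ≤ 1 := Real.exp_le_one_iff.2 (by nlinarith)
    have hE : Real.exp (-γ * (t₀ - a)) = Real.exp (-γ * T) := by
      rw [ha]; ring_nf
    have hEpos : 0 < Real.exp (-γ * T) := Real.exp_pos _
    rw [hE] at hmain
    have hb2 : (B + 1) * Real.exp (-γ * T) * (Real.exp (-μ * x₀) + 1) ≤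
        (B + 1) * Real.exp (-γ * T) * 2 :=
      mul_le_mul_of_nonneg_left (by linarith) (mul_nonneg hm₀.le hEpos.le)
    linarith
  -- now choose T and ρ
  set q : ℝ := ε / (2 * (B + 1) + 1) with hq
  have hqpos : 0 < q := by rw [hq]; positivity
  set T : ℝ := max 1 (-Real.log q / γ) with hT
  have hTpos : (0:ℝ) < T := lt_of_lt_of_le one_pos (le_max_left _ _)
  have hexpT : Real.exp (-γ * T) ≤ q := by
    rw [← Real.exp_log hqpos]
    apply Real.exp_le_exp.2
    have h1 : -Real.log q / γ ≤ T := le_max_right _ _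
    rw [div_le_iff₀ hγpos] at h1
    nlinarith
  have h2 : 2 * (B + 1) * Real.exp (-γ * T) ≤ ε := by
    have h3 : 2 * (B + 1) * Real.exp (-γ * T) ≤ 2 * (B + 1) * q :=
      mul_le_mul_of_nonneg_left hexpT (by linarith)
    have h4 : (2 * (B + 1) + 1) * q = ε := by
      rw [hq]
      field_simp
    nlinarith
  set ρ : ℝ := ε / Real.exp t₀ with hρdef
  have hρpos : 0 < ρ := by rw [hρdef]; positivity
  have hρe : ρ * Real.exp t₀ = ε := by
    rw [hρdef]
    field_simp
  have := core T hTpos ρ hρpos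
  rw [hρe] at this
  linarith
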